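/- Applying the WP-Bailey chain α'_n(a,k) = [(a²/k;q)_{2n}/(kq;q)_{2n}](k²q/a²)^n α_n(a,a²/(kq)), β'_n as in Corollary 2.6, twice in succession returns the original WP-Bailey pair. -/

import Mathlib

open Finset

/-- The q-Pochhammer symbol `(x;q)_m = ∏_{i=0}^{m-1} (1 - x q^i)`. -/
noncomputable def qPoch (q x : ℂ) (m : ℕ) : ℂ := ∏ i ∈ Finset.range m, (1 - x * q ^ i)


lemma qPoch_succ (q x : ℂ) (m : ℕ) : qPoch q x (m+1) = qPoch q x m * (1 - x * q ^ m) :=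
  Finset.prod_range_succ _ _

lemma qPoch_zero (q x : ℂ) : qPoch q x 0 = 1 := Finset.prod_range_zero _

noncomputable def polyA (q x : ℂ) (t : ℕ) : ℂ := ∏ i ∈ Finset.range t, (x - q ^ i)

lemma polyA_succ (q x : ℂ) (t : ℕ) : polyA q x (t+1) = polyA q x t * (x - q ^ t) :=
  Finset.prod_range_succ _ _

lemma polyA_eq (q x : ℂ) (hx : x ≠ 0) (t : ℕ) :
    polyA q x t = x ^ t * qPoch q x⁻¹ t := by
  unfold polyA qPoch
  symm
  calc x ^ t * ∏ i ∈ Finset.range t, (1 - x⁻¹ * q ^ i)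
      = ∏ i ∈ Finset.range t, x * (1 - x⁻¹ * q ^ i) := by
        rw [Finset.prod_mul_distrib, Finset.prod_const, Finset.card_range]
    _ = ∏ i ∈ Finset.range t, (x - q ^ i) := by
        refine Finset.prod_congr rfl fun i _ => ?_
        field_simp

lemma one_sub_ne (q : ℂ) (hq : ∀ m, qPoch q q m ≠ 0) (s : ℕ) : (1 : ℂ) - q * q ^ s ≠ 0 := by
  have := hq (s+1)
  rw [qPoch_succ] at this
  exact right_ne_zero_of_mul this

lemma keyF_rec (q x : ℂ) (hq : ∀ m, qPoch q q m ≠ 0) (m : ℕ) :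
    (∑ t ∈ range (m+2),
        polyA q x t * qPoch q x (m+1-t) / (qPoch q q t * qPoch q q (m+1-t))) * (1 - q * q ^ m)
    = (∑ t ∈ range (m+1),
        polyA q x t * qPoch q x (m-t) / (qPoch q q t * qPoch q q (m-t))) * (1 - q ^ m) := by
  have h1 := one_sub_ne q hq
  set P := qPoch q q with hP
  set B := qPoch q x with hB
  set A := polyA q x with hA
  have split : ∀ t ∈ range (m+2),
      A t * B (m+1-t) / (P t * P (m+1-t)) * (1 - q * q ^ m)
      = (if t = m+1 then 0 else A t * B (m+1-t) / (P t * P (m-t)))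
        + (if t = 0 then 0 else
            q ^ (m+1-t) * A t * B (m+1-t) / (P (t-1) * P (m+1-t))) := by
    intro t ht
    rw [mem_range] at ht
    rcases Nat.eq_or_lt_of_le (Nat.lt_succ_iff.mp ht) with hte | htlt
    · -- t = m+1
      subst hte
      rw [if_pos rfl, if_neg (Nat.succ_ne_zero m), zero_add, Nat.add_sub_cancel,
        Nat.sub_self, pow_zero]
      have hPs : P (m+1) = P m * (1 - q * q ^ m) := qPoch_succ q q m
      rw [hPs, one_mul,
        show P m * (1 - q * q ^ m) * P 0 = P m * P 0 * (1 - q * q ^ m) from by ring,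
        ← div_div]
      exact div_mul_cancel₀ _ (h1 m)
    · -- t ≤ m
      have htm : t ≤ m := Nat.lt_succ_iff.mp htlt
      rw [if_neg (by omega)]
      have hsub : m + 1 - t = (m - t) + 1 := by omega
      have hPs : P (m+1-t) = P (m-t) * (1 - q * q ^ (m-t)) := by
        rw [hsub, hP]; exact qPoch_succ q q (m-t)
      rcases Nat.eq_zero_or_pos t with ht0 | ht1
      · subst ht0
        rw [if_pos rfl, add_zero, Nat.sub_zero, Nat.sub_zero] at *
        rw [hPs, show P 0 * (P m * (1 - q * q ^ m)) = P 0 * P m * (1 - q * q ^ m) from by ring,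
          ← div_div]
        exact div_mul_cancel₀ _ (h1 m)
      · rw [if_neg (by omega)]
        have hts : t = (t-1) + 1 := by omega
        have hPt : P t = P (t-1) * (1 - q * q ^ (t-1)) := by
          rw [hP]; conv_lhs => rw [hts]
          exact qPoch_succ q q (t-1)
        have e2 : q ^ (m+1-t) = q * q ^ (m - t) := by
          rw [hsub, pow_succ]; ring
        have e3 : q ^ m = q ^ (t-1) * q ^ (m-t) * q := by
          rw [← pow_add, ← pow_succ]
          congr 1; omega
        rw [hPs, hPt, e2, e3]
        have n1 := hq (t-1); have n2 := hq (m-t)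
        have n3 := h1 (t-1); have n4 := h1 (m-t)
        field_simp
        ring
  rw [sum_mul, sum_congr rfl split, sum_add_distrib]
  have S1 : ∑ t ∈ range (m+2), (if t = m+1 then 0 else A t * B (m+1-t) / (P t * P (m-t)))
      = ∑ t ∈ range (m+1), A t * B (m+1-t) / (P t * P (m-t)) := by
    rw [sum_range_succ, if_pos rfl, add_zero]
    refine sum_congr rfl fun t ht => if_neg ?_
    rw [mem_range] at ht; omega
  have S2 : ∑ t ∈ range (m+2),
        (if t = 0 then 0 else q ^ (m+1-t) * A t * B (m+1-t) / (P (t-1) * P (m+1-t)))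
      = ∑ t ∈ range (m+1),
        q ^ (m+1-(t+1)) * A (t+1) * B (m+1-(t+1)) / (P (t+1-1) * P (m+1-(t+1))) := by
    rw [sum_range_succ', if_pos rfl, add_zero]
    exact sum_congr rfl fun t _ => if_neg (Nat.succ_ne_zero t)
  rw [S1, S2, sum_mul, ← sum_add_distrib]
  refine sum_congr rfl fun t ht => ?_
  rw [mem_range] at ht
  have htm : t ≤ m := Nat.lt_succ_iff.mp ht
  have hsub : m + 1 - t = (m - t) + 1 := by omega
  have h2 : m + 1 - (t + 1) = m - t := by omega
  have h3 : t + 1 - 1 = t := rfl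
  have hBs : B (m+1-t) = B (m-t) * (1 - x * q ^ (m-t)) := by
    rw [hsub]; exact qPoch_succ q x (m-t)
  have hAs : A (t+1) = A t * (x - q ^ t) := polyA_succ q x t
  have hqm : q ^ m = q ^ (m-t) * q ^ t := by
    rw [← pow_add]; congr 1; omega
  rw [h2, h3, hBs, hAs, hqm]
  have n1 := hq t; have n2 := hq (m-t)
  field_simp
  ring

lemma keyF (q x : ℂ) (hq : ∀ m, qPoch q q m ≠ 0) (m : ℕ) :
    ∑ t ∈ range (m+1),
      polyA q x t * qPoch q x (m-t) / (qPoch q q t * qPoch q q (m-t))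
      = if m = 0 then 1 else 0 := by
  induction m with
  | zero => simp [polyA, qPoch]
  | succ m ih =>
    have hrec := keyF_rec q x hq m
    have hz : (∑ t ∈ range (m+1),
        polyA q x t * qPoch q x (m-t) / (qPoch q q t * qPoch q q (m-t))) * (1 - q ^ m) = 0 := by
      rcases Nat.eq_zero_or_pos m with h0 | h0
      · subst h0; simp
      · rw [ih, if_neg (by omega), zero_mul]
    rw [hz] at hrec
    have := one_sub_ne q hq m
    rw [if_neg (Nat.succ_ne_zero m)]
    exact (mul_eq_zero.mp hrec).resolve_right this

/-- `(α, β)` is a WP-Bailey pair with parameters `a, k` and base `q`. -/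
def IsWPBaileyPair (q a k : ℂ) (α β : ℕ → ℂ) : Prop :=
  ∀ n, β n = ∑ j ∈ Finset.range (n + 1),
    qPoch q (k / a) (n - j) * qPoch q k (n + j) /
      (qPoch q q (n - j) * qPoch q (a * q) (n + j)) * α j

/-- The α-component of the WP-Bailey chain of Corollary 2.6 (output parameters `(a,k)`,
input parameters `(a, a²/(kq))`). -/
noncomputable def chainAlpha (q a k : ℂ) (α : ℕ → ℂ) : ℕ → ℂ :=
  fun n => qPoch q (a ^ 2 / k) (2 * n) / qPoch q (k * q) (2 * n) *
    (k ^ 2 * q / a ^ 2) ^ n * α n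

/-- The β-component of the WP-Bailey chain of Corollary 2.6. -/
noncomputable def chainBeta (q a k : ℂ) (β : ℕ → ℂ) : ℕ → ℂ :=
  fun n => (1 - k) / (1 - k * q ^ (2 * n)) *
    ∑ j ∈ Finset.range (n + 1),
      (1 - a ^ 2 * q ^ (2 * j) / (k * q)) / (1 - a ^ 2 / (k * q)) *
        (qPoch q (k ^ 2 * q / a ^ 2) (n - j) / qPoch q q (n - j)) *
        (k ^ 2 * q / a ^ 2) ^ j * β j

/-- A double application of the chain of Corollary 2.6 returns the original WP-Bailey pair. -/
theorem chain_cor26_involution (q a k : ℂ) (α β : ℕ → ℂ)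
    (ha0 : a ≠ 0) (hk0 : k ≠ 0) (hq0 : q ≠ 0)
    (hq : ∀ m, qPoch q q m ≠ 0)
    (hkq : ∀ m, qPoch q (k * q) m ≠ 0)
    (hak : ∀ m, qPoch q (a ^ 2 / k) m ≠ 0)
    (hk : ∀ m : ℕ, 1 - k * q ^ m ≠ 0)
    (hc : ∀ m : ℕ, 1 - (a ^ 2 / (k * q)) * q ^ m ≠ 0)
    (h : IsWPBaileyPair q a k α β) :
    chainAlpha q a k (chainAlpha q a (a ^ 2 / (k * q)) α) = α ∧
    chainBeta q a k (chainBeta q a (a ^ 2 / (k * q)) β) = β := by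
  have e1 : a ^ 2 / (a ^ 2 / (k * q)) = k * q := by
    field_simp
  have e2 : a ^ 2 / (k * q) * q = a ^ 2 / k := by
    field_simp
  have e3 : (a ^ 2 / (k * q)) ^ 2 * q / a ^ 2 = a ^ 2 / (k ^ 2 * q) := by
    field_simp
  constructor
  · funext n
    simp only [chainAlpha, e1, e2, e3]
    have h4 : (k ^ 2 * q / a ^ 2) ^ n * (a ^ 2 / (k ^ 2 * q)) ^ n = 1 := by
      rw [← mul_pow, show k ^ 2 * q / a ^ 2 * (a ^ 2 / (k ^ 2 * q)) = 1 from by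
        field_simp, one_pow]
    have h5 : qPoch q (a ^ 2 / k) (2*n) / qPoch q (k * q) (2*n) *
        (qPoch q (k * q) (2*n) / qPoch q (a ^ 2 / k) (2*n)) = 1 := by
      rw [div_mul_div_comm, mul_comm]
      exact div_self (mul_ne_zero (hkq (2*n)) (hak (2*n)))
    calc qPoch q (a ^ 2 / k) (2 * n) / qPoch q (k * q) (2 * n) * (k ^ 2 * q / a ^ 2) ^ n *
          (qPoch q (k * q) (2 * n) / qPoch q (a ^ 2 / k) (2 * n) * (a ^ 2 / (k ^ 2 * q)) ^ n * α n)
        = (qPoch q (a ^ 2 / k) (2*n) / qPoch q (k * q) (2*n) *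
            (qPoch q (k * q) (2*n) / qPoch q (a ^ 2 / k) (2*n))) *
          ((k ^ 2 * q / a ^ 2) ^ n * (a ^ 2 / (k ^ 2 * q)) ^ n) * α n := by ring
      _ = α n := by rw [h5, h4, one_mul, one_mul]
  · funext n
    simp only [chainBeta]
    set c := a ^ 2 / (k * q) with hcdef
    set K := k ^ 2 * q / a ^ 2 with hKdef
    have hcm : ∀ m : ℕ, 1 - c * q ^ m ≠ 0 := hc
    have d2 : 1 - c ≠ 0 := by have := hcm 0; simpa using this
    have h1k : 1 - k ≠ 0 := by have := hk 0; simpa using this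
    have hK0 : K ≠ 0 := by
      rw [hKdef]
      exact div_ne_zero (mul_ne_zero (pow_ne_zero 2 hk0) hq0) (pow_ne_zero 2 ha0)
    have g1 : ∀ j : ℕ, a ^ 2 * q ^ (2*j) / (k * q) = c * q ^ (2*j) := fun j => by
      rw [hcdef]; ring
    have g2 : ∀ i : ℕ, a ^ 2 * q ^ (2*i) / (c * q) = k * q ^ (2*i) := fun i => by
      rw [hcdef]; field_simp
    have g3 : a ^ 2 / (c * q) = k := by rw [hcdef]; field_simp
    have g4 : c ^ 2 * q / a ^ 2 = a ^ 2 / (k ^ 2 * q) := by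
      rw [hcdef]; field_simp
    rw [show (1 : ℂ) - a ^ 2 / (k * q) = 1 - c from rfl]
    simp only [g1, g2, g3, g4]
    set K' := a ^ 2 / (k ^ 2 * q) with hK'def
    have hKK' : K * K' = 1 := by rw [hKdef, hK'def]; field_simp
    have hK'inv : K' = K⁻¹ := eq_inv_of_mul_eq_one_left (by linear_combination hKK')
    set P := qPoch q q with hPdef
    set T : ℕ → ℕ → ℂ := fun j i =>
      (1 - k * q ^ (2*i)) / (1 - k) *
        ((qPoch q K (n-j) / P (n-j)) * (qPoch q K' (j-i) / P (j-i)) * (K ^ j * K' ^ i)) * β i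
      with hT
    have stepA : ∀ j ∈ range (n+1),
        (1 - c * q ^ (2*j)) / (1 - c) * (qPoch q K (n-j) / P (n-j)) * K ^ j *
          ((1 - c) / (1 - c * q ^ (2*j)) *
            ∑ i ∈ range (j+1),
              (1 - k * q ^ (2*i)) / (1 - k) * (qPoch q K' (j-i) / P (j-i)) * K' ^ i * β i)
        = ∑ i ∈ range (j+1), T j i := by
      intro j _
      have hcc : (1 - c * q ^ (2*j)) / (1 - c) * ((1 - c) / (1 - c * q ^ (2*j))) = 1 := by
        rw [div_mul_div_comm, mul_comm]
        exact div_self (mul_ne_zero d2 (hcm (2*j)))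
      calc (1 - c * q ^ (2*j)) / (1 - c) * (qPoch q K (n-j) / P (n-j)) * K ^ j *
          ((1 - c) / (1 - c * q ^ (2*j)) *
            ∑ i ∈ range (j+1),
              (1 - k * q ^ (2*i)) / (1 - k) * (qPoch q K' (j-i) / P (j-i)) * K' ^ i * β i)
          = ((1 - c * q ^ (2*j)) / (1 - c) * ((1 - c) / (1 - c * q ^ (2*j)))) *
            ((qPoch q K (n-j) / P (n-j)) * K ^ j *
            ∑ i ∈ range (j+1),
              (1 - k * q ^ (2*i)) / (1 - k) * (qPoch q K' (j-i) / P (j-i)) * K' ^ i * β i) := by ring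
        _ = (qPoch q K (n-j) / P (n-j)) * K ^ j *
            ∑ i ∈ range (j+1),
              (1 - k * q ^ (2*i)) / (1 - k) * (qPoch q K' (j-i) / P (j-i)) * K' ^ i * β i := by
          rw [hcc, one_mul]
        _ = ∑ i ∈ range (j+1), T j i := by
          rw [mul_sum]
          refine sum_congr rfl fun i _ => ?_
          rw [hT]
          ring
    rw [sum_congr rfl stepA]
    have swap : ∑ j ∈ range (n+1), ∑ i ∈ range (j+1), T j i
        = ∑ i ∈ range (n+1), ∑ j ∈ Ico i (n+1), T j i := by
      simp only [Finset.range_eq_Ico]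
      exact (Finset.sum_Ico_Ico_comm 0 (n+1) fun i j => T j i).symm
    rw [swap]
    have stepC : ∀ i ∈ range (n+1), ∑ j ∈ Ico i (n+1), T j i
        = (1 - k * q ^ (2*i)) / (1 - k) * β i * (if n - i = 0 then 1 else 0) := by
      intro i hi
      rw [mem_range] at hi
      have hin : i ≤ n := Nat.lt_succ_iff.mp hi
      rw [Finset.sum_Ico_eq_sum_range, show n + 1 - i = (n - i) + 1 from by omega]
      have hterm : ∀ t ∈ range ((n-i)+1), T (i+t) i
          = (1 - k * q ^ (2*i)) / (1 - k) * β i *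
            (polyA q K t * qPoch q K (n-i-t) / (P t * P (n-i-t))) := by
        intro t ht
        rw [mem_range] at ht
        have e5 : n - (i+t) = n - i - t := by omega
        have e6 : i + t - i = t := by omega
        have e7 : K ^ (i+t) * K' ^ i = K ^ t := by
          calc K ^ (i+t) * K' ^ i = (K * K') ^ i * K ^ t := by rw [pow_add, mul_pow]; ring
            _ = K ^ t := by rw [hKK', one_pow, one_mul]
        rw [hT]
        simp only [e5, e6]
        rw [show qPoch q K (n-i-t) / P (n-i-t) * (qPoch q K' t / P t) * (K ^ (i+t) * K' ^ i)
            = qPoch q K (n-i-t) / P (n-i-t) * (qPoch q K' t / P t) * K ^ t from by rw [e7],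
          polyA_eq q K hK0 t, ← hK'inv]
        ring
      rw [sum_congr rfl hterm, ← mul_sum, keyF q K hq (n-i)]
    rw [sum_congr rfl stepC, Finset.sum_eq_single_of_mem n (self_mem_range_succ n)
      (fun i hi hne => by
        rw [mem_range] at hi
        rw [if_neg, mul_zero]
        intro h0
        exact hne (by omega))]
    rw [Nat.sub_self, if_pos rfl, mul_one]
    have hfin : (1 - k) / (1 - k * q ^ (2*n)) * ((1 - k * q ^ (2*n)) / (1 - k)) = 1 := by
      rw [div_mul_div_comm, mul_comm]
      exact div_self (mul_ne_zero (hk (2*n)) h1k)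
    calc (1 - k) / (1 - k * q ^ (2*n)) * ((1 - k * q ^ (2*n)) / (1 - k) * β n)
        = ((1 - k) / (1 - k * q ^ (2*n)) * ((1 - k * q ^ (2*n)) / (1 - k))) * β n := by ring
      _ = β n := by rw [hfin, one_mul]
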